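/- For positive definite matrices A, B and ν ∈ [0,1], the Heinz mean satisfies the angle in-betweenness inequality: trace(B²) · (trace(A^(1+ν)·B^(1-ν)))² ≥ trace(A^(2ν)·B^(2(1-ν))) · (trace(AB))². -/

import Mathlib

open Matrix MeasureTheory
open scoped ComplexOrder

/-- Apply a real function to a Hermitian matrix via the spectral decomposition. -/
noncomputable def matFun {n : ℕ} (A : Matrix (Fin n) (Fin n) ℂ) (hA : A.IsHermitian)
    (g : ℝ → ℝ) : Matrix (Fin n) (Fin n) ℂ :=
  (hA.eigenvectorUnitary : Matrix (Fin n) (Fin n) ℂ) *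
    Matrix.diagonal (fun i => (g (hA.eigenvalues i) : ℂ)) *
    star (hA.eigenvectorUnitary : Matrix (Fin n) (Fin n) ℂ)

/-- Real power of a Hermitian matrix via the spectral decomposition. -/
noncomputable def mpow {n : ℕ} (A : Matrix (Fin n) (Fin n) ℂ) (hA : A.IsHermitian)
    (p : ℝ) : Matrix (Fin n) (Fin n) ℂ :=
  matFun A hA (fun x => x ^ p)

/-- Hilbert-Schmidt (Frobenius) norm of a matrix. -/
noncomputable def frob {n : ℕ} (X : Matrix (Fin n) (Fin n) ℂ) : ℝ :=
  Real.sqrt (Matrix.trace (star X * X)).re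

section Aux

variable {ι : Type*} [Fintype ι]

/-- weighted Chebyshev-type inequality for similarly ordered powers -/
lemma aux_cheb (w x : ι → ℝ) (hw : ∀ i, 0 ≤ w i) (hx : ∀ i, 0 < x i) (ν : ℝ)
    (h0 : 0 ≤ ν) (h1 : ν ≤ 1) :
    (∑ i, w i * x i ^ (2*ν)) * (∑ i, w i * x i ^ (1-ν)) ≤
      (∑ i, w i) * (∑ i, w i * x i ^ (1+ν)) := by
  set p : ι → ℝ := fun i => x i ^ (2*ν) with hp
  set q : ι → ℝ := fun i => x i ^ (1-ν) with hq
  have hpq : ∀ i, p i * q i = x i ^ (1+ν) := by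
    intro i
    rw [hp, hq, ← Real.rpow_add (hx i)]
    ring_nf
  have key : 0 ≤ ∑ i, ∑ j, w i * w j * ((p i - p j) * (q i - q j)) := by
    apply Finset.sum_nonneg; intro i _
    apply Finset.sum_nonneg; intro j _
    apply mul_nonneg (mul_nonneg (hw i) (hw j))
    rcases le_total (x i) (x j) with h | h
    · have h1' : p i ≤ p j := Real.rpow_le_rpow (hx i).le h (by linarith)
      have h2' : q i ≤ q j := Real.rpow_le_rpow (hx i).le h (by linarith)
      nlinarith
    · have h1' : p j ≤ p i := Real.rpow_le_rpow (hx j).le h (by linarith)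
      have h2' : q j ≤ q i := Real.rpow_le_rpow (hx j).le h (by linarith)
      nlinarith
  have expand : (∑ i, ∑ j, w i * w j * ((p i - p j) * (q i - q j)))
      = 2 * ((∑ i, w i) * (∑ i, w i * (p i * q i))
          - (∑ i, w i * p i) * (∑ i, w i * q i)) := by
    have e1 : (∑ i, w i) * (∑ i, w i * (p i * q i))
        = ∑ i : ι, ∑ j : ι, w i * (w j * (p j * q j)) :=
      Finset.sum_mul_sum _ _ _ _
    have e1' : (∑ i, w i * (p i * q i)) * (∑ i, w i)
        = ∑ i : ι, ∑ j : ι, (w i * (p i * q i)) * w j :=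
      Finset.sum_mul_sum _ _ _ _
    have e2 : (∑ i, w i * p i) * (∑ i, w i * q i)
        = ∑ i : ι, ∑ j : ι, (w i * p i) * (w j * q j) :=
      Finset.sum_mul_sum _ _ _ _
    have e2' : (∑ i, w i * q i) * (∑ i, w i * p i)
        = ∑ i : ι, ∑ j : ι, (w i * q i) * (w j * p j) :=
      Finset.sum_mul_sum _ _ _ _
    calc (∑ i, ∑ j, w i * w j * ((p i - p j) * (q i - q j)))
        = ∑ i : ι, ∑ j : ι, ((w i * (p i * q i)) * w j + w i * (w j * (p j * q j))
            - (w i * p i) * (w j * q j) - (w i * q i) * (w j * p j)) := by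
          apply Finset.sum_congr rfl; intro i _
          apply Finset.sum_congr rfl; intro j _
          ring
      _ = (∑ i : ι, ∑ j : ι, (w i * (p i * q i)) * w j)
            + (∑ i : ι, ∑ j : ι, w i * (w j * (p j * q j)))
            - (∑ i : ι, ∑ j : ι, (w i * p i) * (w j * q j))
            - (∑ i : ι, ∑ j : ι, (w i * q i) * (w j * p j)) := by
          simp [Finset.sum_add_distrib, Finset.sum_sub_distrib]
      _ = 2 * ((∑ i, w i) * (∑ i, w i * (p i * q i))
            - (∑ i, w i * p i) * (∑ i, w i * q i)) := by
          rw [← e1', ← e1, ← e2, ← e2']; ring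
  rw [expand] at key
  have goal' : (∑ i, w i * p i) * (∑ i, w i * q i)
      ≤ (∑ i, w i) * (∑ i, w i * (p i * q i)) := by linarith
  calc (∑ i, w i * x i ^ (2*ν)) * (∑ i, w i * x i ^ (1-ν))
      = (∑ i, w i * p i) * (∑ i, w i * q i) := rfl
    _ ≤ (∑ i, w i) * (∑ i, w i * (p i * q i)) := goal'
    _ = (∑ i, w i) * (∑ i, w i * x i ^ (1+ν)) := by
        congr 1; apply Finset.sum_congr rfl; intro i _; rw [hpq]

/-- Cauchy–Schwarz step -/
lemma aux_cs (w x : ι → ℝ) (hw : ∀ i, 0 ≤ w i) (hx : ∀ i, 0 < x i) (ν : ℝ) :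
    (∑ i, w i * x i) ^ 2 ≤ (∑ i, w i * x i ^ (1+ν)) * (∑ i, w i * x i ^ (1-ν)) := by
  have h := Finset.sum_mul_sq_le_sq_mul_sq Finset.univ
    (fun i => Real.sqrt (w i) * x i ^ ((1+ν)/2))
    (fun i => Real.sqrt (w i) * x i ^ ((1-ν)/2))
  have e0 : ∀ i : ι, (Real.sqrt (w i) * x i ^ ((1+ν)/2)) * (Real.sqrt (w i) * x i ^ ((1-ν)/2))
      = w i * x i := by
    intro i
    have h' : x i ^ ((1+ν)/2) * x i ^ ((1-ν)/2) = x i := by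
      rw [← Real.rpow_add (hx i)]
      have : (1+ν)/2 + (1-ν)/2 = 1 := by ring
      rw [this, Real.rpow_one]
    calc (Real.sqrt (w i) * x i ^ ((1+ν)/2)) * (Real.sqrt (w i) * x i ^ ((1-ν)/2))
        = (Real.sqrt (w i) * Real.sqrt (w i)) * (x i ^ ((1+ν)/2) * x i ^ ((1-ν)/2)) := by ring
      _ = w i * x i := by rw [Real.mul_self_sqrt (hw i), h']
  have e1 : ∀ (t : ℝ) (i : ι), (Real.sqrt (w i) * x i ^ (t/2)) ^ 2 = w i * x i ^ t := by
    intro t i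
    have h' : (x i ^ (t/2)) ^ 2 = x i ^ t := by
      rw [sq, ← Real.rpow_add (hx i)]
      norm_num
    rw [mul_pow, Real.sq_sqrt (hw i), h']
  simp only [e0, e1] at h
  exact h

/-- the master scalar inequality -/
lemma aux_main (w x : ι → ℝ) (hw : ∀ i, 0 ≤ w i) (hx : ∀ i, 0 < x i) (ν : ℝ)
    (h0 : 0 ≤ ν) (h1 : ν ≤ 1) :
    (∑ i, w i * x i ^ (2*ν)) * (∑ i, w i * x i) ^ 2 ≤
      (∑ i, w i) * (∑ i, w i * x i ^ (1+ν)) ^ 2 := by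
  have hcs := aux_cs w x hw hx ν
  have hch := aux_cheb w x hw hx ν h0 h1
  have n1 : 0 ≤ ∑ i, w i * x i ^ (2*ν) :=
    Finset.sum_nonneg fun i _ => mul_nonneg (hw i) (Real.rpow_nonneg (hx i).le _)
  have n2 : 0 ≤ ∑ i, w i * x i ^ (1+ν) :=
    Finset.sum_nonneg fun i _ => mul_nonneg (hw i) (Real.rpow_nonneg (hx i).le _)
  have n3 : 0 ≤ ∑ i, w i * x i ^ (1-ν) :=
    Finset.sum_nonneg fun i _ => mul_nonneg (hw i) (Real.rpow_nonneg (hx i).le _)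
  nlinarith [mul_le_mul_of_nonneg_left hcs n1,
    mul_le_mul_of_nonneg_right hch n2]

lemma aux_rpow (a b c t : ℝ) (ha : 0 < a) (hb : 0 < b) :
    a ^ t * b ^ (2 - t) * c = (c * b ^ 2) * (a / b) ^ t := by
  rw [Real.div_rpow ha.le hb.le, Real.rpow_sub hb]
  have h2 : b ^ (2:ℝ) = b ^ (2:ℕ) := by
    rw [← Real.rpow_natCast]; norm_num
  rw [h2]
  have hbt : b ^ t ≠ 0 := (Real.rpow_pos_of_pos hb t).ne'
  field_simp

end Aux

section Trace

variable {n : ℕ} {A B : Matrix (Fin n) (Fin n) ℂ}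

lemma trace_matFun_mul (hA : A.IsHermitian) (hB : B.IsHermitian) (f g : ℝ → ℝ) :
    (Matrix.trace (matFun A hA f * matFun B hB g)).re =
      ∑ i, ∑ j, f (hA.eigenvalues i) * g (hB.eigenvalues j) *
        Complex.normSq ((star (hA.eigenvectorUnitary : Matrix (Fin n) (Fin n) ℂ) *
          (hB.eigenvectorUnitary : Matrix (Fin n) (Fin n) ℂ)) i j) := by
  set U : Matrix (Fin n) (Fin n) ℂ := (hA.eigenvectorUnitary : Matrix (Fin n) (Fin n) ℂ) with hU
  set V : Matrix (Fin n) (Fin n) ℂ := (hB.eigenvectorUnitary : Matrix (Fin n) (Fin n) ℂ) with hV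
  set d : Fin n → ℂ := fun i => (f (hA.eigenvalues i) : ℂ) with hd
  set e : Fin n → ℂ := fun i => (g (hB.eigenvalues i) : ℂ) with he
  set C : Matrix (Fin n) (Fin n) ℂ := star U * V with hC
  have hUU : U * star U = 1 := Unitary.mul_star_self_of_mem hA.eigenvectorUnitary.2
  have hUsU : star U * U = 1 := Unitary.star_mul_self_of_mem hA.eigenvectorUnitary.2
  have hsC : star V * U = star C := by rw [hC, StarMul.star_mul, star_star]
  have h1 : matFun A hA f * matFun B hB g =
      U * (Matrix.diagonal d * C * Matrix.diagonal e * star C) * star U := by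
    show (U * Matrix.diagonal d * star U) * (V * Matrix.diagonal e * star V) = _
    rw [hC, ← hsC]
    simp only [Matrix.mul_assoc, hUU, Matrix.mul_one]
  have h2 : Matrix.trace (matFun A hA f * matFun B hB g)
      = Matrix.trace (Matrix.diagonal d * C * Matrix.diagonal e * star C) := by
    rw [h1, Matrix.trace_mul_cycle, ← Matrix.mul_assoc, hUsU, Matrix.one_mul]
  have h3 : Matrix.trace (Matrix.diagonal d * C * Matrix.diagonal e * star C)
      = ∑ i, ∑ j, d i * C i j * e j * (starRingEnd ℂ) (C i j) := by
    simp only [Matrix.trace, Matrix.diag]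
    apply Finset.sum_congr rfl; intro i _
    rw [Matrix.mul_apply]
    apply Finset.sum_congr rfl; intro j _
    rw [Matrix.mul_diagonal, Matrix.diagonal_mul, Matrix.star_apply, RCLike.star_def]
  rw [h2, h3, Complex.re_sum]
  apply Finset.sum_congr rfl; intro i _
  rw [Complex.re_sum]
  apply Finset.sum_congr rfl; intro j _
  have h4 : d i * C i j * e j * (starRingEnd ℂ) (C i j)
      = ((f (hA.eigenvalues i) * g (hB.eigenvalues j) * Complex.normSq (C i j) : ℝ) : ℂ) := by
    rw [hd, he]
    push_cast [← Complex.mul_conj]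
    ring
  rw [h4, Complex.ofReal_re]

lemma matFun_id (hA : A.IsHermitian) : matFun A hA (fun x => x) = A := by
  rw [matFun]
  exact (hA.spectral_theorem).symm

lemma matFun_one (hA : A.IsHermitian) : matFun A hA (fun _ => 1) = 1 := by
  rw [matFun]
  have : (Matrix.diagonal (fun _ : Fin n => ((1:ℝ):ℂ))) = (1 : Matrix (Fin n) (Fin n) ℂ) := by
    simp
  rw [this, Matrix.mul_one]
  exact Unitary.mul_star_self_of_mem hA.eigenvectorUnitary.2

lemma matFun_mul (hA : A.IsHermitian) (f g : ℝ → ℝ) :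
    matFun A hA f * matFun A hA g = matFun A hA (fun x => f x * g x) := by
  set U : Matrix (Fin n) (Fin n) ℂ := (hA.eigenvectorUnitary : Matrix (Fin n) (Fin n) ℂ) with hU
  have hUsU : star U * U = 1 := Unitary.star_mul_self_of_mem hA.eigenvectorUnitary.2
  show (U * _ * star U) * (U * _ * star U) = U * _ * star U
  simp only [Matrix.mul_assoc]
  rw [← Matrix.mul_assoc (star U) U, hUsU, Matrix.one_mul,
    ← Matrix.mul_assoc (Matrix.diagonal _), Matrix.diagonal_mul_diagonal]
  congr 2
  ext i
  push_cast
  ring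

end Trace

theorem stmt11 {n : ℕ} (A B : Matrix (Fin n) (Fin n) ℂ)
    (hA : A.PosDef) (hB : B.PosDef) (ν : ℝ) (hν : ν ∈ Set.Icc (0:ℝ) 1) :
    (Matrix.trace (mpow A hA.1 (2 * ν) * mpow B hB.1 (2 * (1 - ν)))).re *
        (Matrix.trace (A * B)).re ^ 2 ≤
      (Matrix.trace (B * B)).re *
        (Matrix.trace (mpow A hA.1 (1 + ν) * mpow B hB.1 (1 - ν))).re ^ 2 := by
  obtain ⟨h0, h1⟩ := hν
  set a : Fin n → ℝ := hA.1.eigenvalues with ha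
  set b : Fin n → ℝ := hB.1.eigenvalues with hb
  have hap : ∀ i, 0 < a i := hA.eigenvalues_pos
  have hbp : ∀ i, 0 < b i := hB.eigenvalues_pos
  set C : Matrix (Fin n) (Fin n) ℂ :=
    star (hA.1.eigenvectorUnitary : Matrix (Fin n) (Fin n) ℂ) *
      (hB.1.eigenvectorUnitary : Matrix (Fin n) (Fin n) ℂ) with hC
  -- the four traces
  have t1 : (Matrix.trace (mpow A hA.1 (2 * ν) * mpow B hB.1 (2 * (1 - ν)))).re
      = ∑ i, ∑ j, a i ^ (2*ν) * b j ^ (2*(1-ν)) * Complex.normSq (C i j) :=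
    trace_matFun_mul hA.1 hB.1 _ _
  have t2 : (Matrix.trace (A * B)).re
      = ∑ i, ∑ j, a i * b j * Complex.normSq (C i j) := by
    conv_lhs => rw [← matFun_id hA.1, ← matFun_id hB.1]
    exact trace_matFun_mul hA.1 hB.1 _ _
  have t3 : (Matrix.trace (B * B)).re
      = ∑ i, ∑ j, 1 * (b j * b j) * Complex.normSq (C i j) := by
    have hBB : B * B = matFun A hA.1 (fun _ => 1) * matFun B hB.1 (fun x => x * x) := by
      rw [matFun_one hA.1, Matrix.one_mul, ← matFun_mul hB.1]
      rw [matFun_id hB.1]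
    rw [hBB]
    exact trace_matFun_mul hA.1 hB.1 _ _
  have t4 : (Matrix.trace (mpow A hA.1 (1 + ν) * mpow B hB.1 (1 - ν))).re
      = ∑ i, ∑ j, a i ^ (1+ν) * b j ^ (1-ν) * Complex.normSq (C i j) :=
    trace_matFun_mul hA.1 hB.1 _ _
  rw [t1, t2, t3, t4]
  -- convert to product-indexed sums
  set w : Fin n × Fin n → ℝ := fun p => Complex.normSq (C p.1 p.2) * (b p.2) ^ 2 with hw
  set x : Fin n × Fin n → ℝ := fun p => a p.1 / b p.2 with hx
  have hwn : ∀ p, 0 ≤ w p := fun p => mul_nonneg (Complex.normSq_nonneg _) (by positivity)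
  have hxp : ∀ p, 0 < x p := fun p => div_pos (hap _) (hbp _)
  have c1 : (∑ i, ∑ j, a i ^ (2*ν) * b j ^ (2*(1-ν)) * Complex.normSq (C i j))
      = ∑ p : Fin n × Fin n, w p * x p ^ (2*ν) := by
    rw [Fintype.sum_prod_type]
    apply Finset.sum_congr rfl; intro i _
    apply Finset.sum_congr rfl; intro j _
    have : (2*(1-ν) : ℝ) = 2 - 2*ν := by ring
    rw [this]
    exact aux_rpow _ _ _ _ (hap i) (hbp j)
  have c2 : (∑ i, ∑ j, a i * b j * Complex.normSq (C i j))
      = ∑ p : Fin n × Fin n, w p * x p := by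
    rw [Fintype.sum_prod_type]
    apply Finset.sum_congr rfl; intro i _
    apply Finset.sum_congr rfl; intro j _
    have h' := aux_rpow (a i) (b j) (Complex.normSq (C i j)) 1 (hap i) (hbp j)
    rw [Real.rpow_one, Real.rpow_one] at h'
    have h2 : (b j) ^ (2 - 1 : ℝ) = b j := by
      norm_num
    rw [h2] at h'
    exact h'
  have c3 : (∑ i, ∑ j, 1 * (b j * b j) * Complex.normSq (C i j))
      = ∑ p : Fin n × Fin n, w p := by
    rw [Fintype.sum_prod_type]
    apply Finset.sum_congr rfl; intro i _
    apply Finset.sum_congr rfl; intro j _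
    rw [hw]
    ring
  have c4 : (∑ i, ∑ j, a i ^ (1+ν) * b j ^ (1-ν) * Complex.normSq (C i j))
      = ∑ p : Fin n × Fin n, w p * x p ^ (1+ν) := by
    rw [Fintype.sum_prod_type]
    apply Finset.sum_congr rfl; intro i _
    apply Finset.sum_congr rfl; intro j _
    have : (1-ν : ℝ) = 2 - (1+ν) := by ring
    rw [this]
    exact aux_rpow _ _ _ _ (hap i) (hbp j)
  rw [c1, c2, c3, c4]
  exact aux_main w x hwn hxp ν h0 h1
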